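/- Let f be a real polynomial of degree k ≥ 2 with k simple real zeros x_1 < x_2 < ... < x_k, and let a, b be real-valued functions, each differentiable on an open neighborhood of x_i, such that f''(x) − 2·a(x)·f'(x) + b(x)·f(x) = 0 for all x in that neighborhood. Then for each i, ∑_{j ≠ i} 1/(x_i − x_j)² = (Δ(x_i) − 2·a'(x_i))/3, where Δ(x) = b(x) − a(x)². -/

import Mathlib

open Polynomial Finset

lemma my_derivative_finset_prod {ι : Type*} [DecidableEq ι] (s : Finset ι) (f : ι → Polynomial ℝ) :
    derivative (∏ i ∈ s, f i) = ∑ i ∈ s, (∏ j ∈ s.erase i, f j) * derivative (f i) := by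
  induction s using Finset.induction with
  | empty => simp
  | @insert a s ha ih =>
    rw [Finset.prod_insert ha, derivative_mul, ih, Finset.sum_insert ha,
      Finset.erase_insert ha, Finset.mul_sum]
    congr 1
    · ring
    refine Finset.sum_congr rfl fun i hi => ?_
    rw [Finset.erase_insert_of_ne (by rintro rfl; exact ha hi),
      Finset.prod_insert (fun h => ha (Finset.mem_of_mem_erase h))]
    ring

/-- **Bethe ansatz equation.** Let `f` be a real polynomial of degree `k ≥ 2` with `k`
simple real zeros `x 0 < x 1 < ... < x (k-1)`, and let `a, b` be real-valued functions,
each differentiable on an open neighborhood of `x i`, such that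
`f'' - 2 a f' + b f = 0` on that neighborhood.  Then for each `i`,
`∑_{j ≠ i} 1/(x i - x j)² = (Δ(x i) - 2 a'(x i))/3` where `Δ y = b y - (a y)²`. -/
theorem bethe_ansatz_second_negative_moment
    (k : ℕ) (hk : 2 ≤ k) (f : Polynomial ℝ) (hdeg : f.natDegree = k)
    (x : Fin k → ℝ) (hmono : StrictMono x)
    (hroot : ∀ i : Fin k, f.eval (x i) = 0)
    (a b : ℝ → ℝ)
    (hode : ∀ i : Fin k, ∃ U : Set ℝ, IsOpen U ∧ x i ∈ U ∧
      DifferentiableOn ℝ a U ∧ DifferentiableOn ℝ b U ∧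
      ∀ y ∈ U, deriv (deriv (fun t => f.eval t)) y
        - 2 * a y * deriv (fun t => f.eval t) y + b y * f.eval y = 0) :
    ∀ i : Fin k,
      ∑ j ∈ Finset.univ.erase i, 1 / (x i - x j) ^ 2
        = ((b (x i) - (a (x i)) ^ 2) - 2 * deriv a (x i)) / 3 := by
  classical
  -- Factorization of f
  have hxinj : Function.Injective x := hmono.injective
  have hf0 : f ≠ 0 := by
    intro h; rw [h] at hdeg; simp at hdeg; omega
  set M : Multiset ℝ := Finset.univ.val.map x with hM
  have hMnodup : M.Nodup := Multiset.Nodup.map hxinj Finset.univ.nodup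
  have hMcard : Multiset.card M = k := by simp [hM]
  have hMle : M ≤ f.roots := by
    refine Multiset.le_iff_count.2 fun r => ?_
    by_cases hr : r ∈ M
    · rw [Multiset.count_eq_one_of_mem hMnodup hr]
      obtain ⟨j, _, rfl⟩ := Multiset.mem_map.1 hr
      exact Multiset.one_le_count_iff_mem.2 (Polynomial.mem_roots'.2 ⟨hf0, hroot j⟩)
    · simp [Multiset.count_eq_zero_of_notMem hr]
  have hMeq : M = f.roots := Multiset.eq_of_le_of_card_le hMle
    (by rw [hMcard, ← hdeg]; exact Polynomial.card_roots' f)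
  have hsplits : Splits f :=
    Polynomial.splits_iff_card_roots.2 (by rw [← hMeq, hMcard, hdeg])
  set c : ℝ := f.leadingCoeff with hcdef
  have hc : c ≠ 0 := Polynomial.leadingCoeff_ne_zero.2 hf0
  have hfac : f = C c * ∏ j ∈ Finset.univ, (X - C (x j)) := by
    have hprod : ∏ j ∈ Finset.univ, (X - C (x j))
        = (Multiset.map (fun a => X - C a) f.roots).prod := by
      rw [← hMeq, hM, Multiset.map_map]; rfl
    rw [hprod]
    exact hsplits.eq_prod_roots
  intro i
  set s := Finset.univ.erase i with hs
  have hne : ∀ j ∈ s, x i - x j ≠ 0 := by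
    intro j hj
    exact sub_ne_zero.2 (hxinj.ne (Finset.ne_of_mem_erase hj).symm)
  set h : Polynomial ℝ := ∏ j ∈ s, (X - C (x j)) with hh
  have hf : f = C c * ((X - C (x i)) * h) := by
    rw [hfac, hh, hs, ← Finset.mul_prod_erase Finset.univ _ (Finset.mem_univ i)]
  set Pv : ℝ := ∏ j ∈ s, (x i - x j) with hPv
  set u : Fin k → ℝ := fun j => (x i - x j)⁻¹ with hu
  set p : ℝ := ∑ j ∈ s, u j with hp
  set S : ℝ := ∑ j ∈ s, (u j) ^ 2 with hS
  have hPvne : Pv ≠ 0 := Finset.prod_ne_zero_iff.2 hne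
  have hEv : h.eval (x i) = Pv := by simp [hh, hPv, Polynomial.eval_prod]
  have key : ∀ j ∈ s, ∏ l ∈ s.erase j, (x i - x l) = Pv * u j := by
    intro j hj
    have hjne := hne j hj
    have h1 : (x i - x j) * ∏ l ∈ s.erase j, (x i - x l) = Pv :=
      Finset.mul_prod_erase s (fun l => x i - x l) hj
    calc ∏ l ∈ s.erase j, (x i - x l)
        = (x i - x j)⁻¹ * ((x i - x j) * ∏ l ∈ s.erase j, (x i - x l)) := by
          rw [inv_mul_cancel_left₀ hjne]
      _ = Pv * u j := by rw [h1, hu]; ring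
  have key2 : ∀ j ∈ s, ∀ m ∈ s.erase j,
      ∏ l ∈ (s.erase j).erase m, (x i - x l) = Pv * u j * u m := by
    intro j hj m hm
    have hmne : x i - x m ≠ 0 := hne m (Finset.mem_of_mem_erase hm)
    have h1 : (x i - x m) * ∏ l ∈ (s.erase j).erase m, (x i - x l)
        = ∏ l ∈ s.erase j, (x i - x l) :=
      Finset.mul_prod_erase (s.erase j) (fun l => x i - x l) hm
    rw [key j hj] at h1
    calc ∏ l ∈ (s.erase j).erase m, (x i - x l)
        = (x i - x m)⁻¹ * ((x i - x m) * ∏ l ∈ (s.erase j).erase m, (x i - x l)) := by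
          rw [inv_mul_cancel_left₀ hmne]
      _ = Pv * u j * u m := by rw [h1, hu]; ring
  have hE1 : (derivative h).eval (x i) = Pv * p := by
    rw [hh, my_derivative_finset_prod]
    simp only [Polynomial.derivative_X_sub_C, mul_one, Polynomial.eval_finset_sum,
      Polynomial.eval_prod, Polynomial.eval_sub, Polynomial.eval_X, Polynomial.eval_C]
    rw [hp, Finset.mul_sum]
    exact Finset.sum_congr rfl key
  have hE2 : (derivative (derivative h)).eval (x i) = Pv * (p ^ 2 - S) := by
    rw [hh, my_derivative_finset_prod]
    simp only [Polynomial.derivative_X_sub_C, mul_one]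
    rw [derivative_sum]
    simp only [my_derivative_finset_prod, Polynomial.derivative_X_sub_C, mul_one,
      Polynomial.eval_finset_sum, Polynomial.eval_prod, Polynomial.eval_sub,
      Polynomial.eval_X, Polynomial.eval_C]
    have step1 : ∀ j ∈ s, ∑ m ∈ (s.erase j), ∏ l ∈ (s.erase j).erase m, (x i - x l)
        = Pv * u j * (p - u j) := by
      intro j hj
      rw [Finset.sum_congr rfl (key2 j hj), ← Finset.mul_sum,
        Finset.sum_erase_eq_sub hj, ← hp]
    rw [Finset.sum_congr rfl step1]
    calc ∑ j ∈ s, Pv * u j * (p - u j)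
        = ∑ j ∈ s, (Pv * p * u j - Pv * u j ^ 2) :=
          Finset.sum_congr rfl fun j _ => by ring
      _ = Pv * p * ∑ j ∈ s, u j - Pv * ∑ j ∈ s, u j ^ 2 := by
          rw [Finset.sum_sub_distrib, ← Finset.mul_sum, ← Finset.mul_sum]
      _ = Pv * (p ^ 2 - S) := by rw [← hp, ← hS]; ring
  -- derivative evaluations of f at x i
  have e1 : f.derivative.eval (x i) = c * h.eval (x i) := by
    rw [hf]
    simp [Polynomial.derivative_mul, Polynomial.eval_mul, Polynomial.eval_add, sub_self]
    all_goals first | exact Or.inl (by ring) | ring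
  have e2 : f.derivative.derivative.eval (x i) = c * (2 * (derivative h).eval (x i)) := by
    rw [hf]
    simp [Polynomial.derivative_mul, Polynomial.eval_mul, Polynomial.eval_add, sub_self]
    all_goals first | exact Or.inl (by ring) | ring
  have e3 : f.derivative.derivative.derivative.eval (x i)
      = c * (3 * (derivative (derivative h)).eval (x i)) := by
    rw [hf]
    simp [Polynomial.derivative_mul, Polynomial.eval_mul, Polynomial.eval_add, sub_self]
    all_goals first | exact Or.inl (by ring) | ring
  rw [hEv] at e1; rw [hE1] at e2; rw [hE2] at e3
  -- ODE facts
  obtain ⟨U, hUo, hxU, hda, hdb, hU⟩ := hode i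
  have hd1 : (deriv fun t => Polynomial.eval t f) = fun t => Polynomial.eval t (derivative f) := by
    funext t; exact Polynomial.deriv (p := f)
  have hU' : ∀ y ∈ U, (derivative (derivative f)).eval y
      - 2 * a y * (derivative f).eval y + b y * f.eval y = 0 := by
    intro y hy
    have := hU y hy
    rw [hd1] at this
    rwa [show (deriv fun t => Polynomial.eval t (derivative f)) y
      = (derivative (derivative f)).eval y from Polynomial.deriv (p := derivative f)] at this
  have hnhds : U ∈ nhds (x i) := hUo.mem_nhds hxU
  have ha' : HasDerivAt a (deriv a (x i)) (x i) :=
    ((hda.differentiableAt hnhds)).hasDerivAt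
  have hb' : HasDerivAt b (deriv b (x i)) (x i) :=
    ((hdb.differentiableAt hnhds)).hasDerivAt
  have hG : HasDerivAt (fun y => (derivative (derivative f)).eval y
      - 2 * a y * (derivative f).eval y + b y * f.eval y)
      ((derivative (derivative (derivative f))).eval (x i)
        - (2 * deriv a (x i) * (derivative f).eval (x i)
          + 2 * a (x i) * (derivative (derivative f)).eval (x i))
        + (deriv b (x i) * f.eval (x i) + b (x i) * (derivative f).eval (x i))) (x i) :=
    ((Polynomial.hasDerivAt (derivative (derivative f)) (x i)).sub
      ((ha'.const_mul 2).mul (Polynomial.hasDerivAt (derivative f) (x i)))).add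
      (hb'.mul (Polynomial.hasDerivAt f (x i)))
  have hzero : HasDerivAt (fun _ : ℝ => (0:ℝ))
      ((derivative (derivative (derivative f))).eval (x i)
        - (2 * deriv a (x i) * (derivative f).eval (x i)
          + 2 * a (x i) * (derivative (derivative f)).eval (x i))
        + (deriv b (x i) * f.eval (x i) + b (x i) * (derivative f).eval (x i))) (x i) := by
    refine hG.congr_of_eventuallyEq ?_
    filter_upwards [hnhds] with y hy using (hU' y hy).symm
  have Eq2 := hzero.unique (hasDerivAt_const (x i) 0)
  have Eq1 := hU' (x i) hxU
  rw [e1, e2, hroot i] at Eq1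
  rw [e1, e2, e3, hroot i] at Eq2
  -- algebra
  have hcPv : c * Pv ≠ 0 := mul_ne_zero hc hPvne
  have hpa : p = a (x i) := by
    have h2 : (c * Pv) * (2 * (p - a (x i))) = 0 := by linear_combination Eq1
    have := (mul_eq_zero.1 h2).resolve_left hcPv
    have : p - a (x i) = 0 := by linarith
    linarith
  have hbr : 3 * (p ^ 2 - S) - 2 * deriv a (x i) - 4 * a (x i) * p + b (x i) = 0 := by
    have h2 : (c * Pv) * (3 * (p ^ 2 - S) - 2 * deriv a (x i) - 4 * a (x i) * p + b (x i)) = 0 := by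
      linear_combination Eq2
    exact (mul_eq_zero.1 h2).resolve_left hcPv
  rw [hpa] at hbr
  have hgoal : ∑ j ∈ s, 1 / (x i - x j) ^ 2 = S := by
    rw [hS]
    refine Finset.sum_congr rfl fun j _ => ?_
    rw [hu, one_div, ← inv_pow]
  rw [hgoal]
  linear_combination (-1/3 : ℝ) * hbr
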